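/- In Game 2 on a set A ⊆ ω^ω, Player II has a winning strategy if and only if there exists a Hechler tree H with [H] ⊆ A. -/

import Mathlib

/-- The restriction `x↾n` of `x : ℕ → ℕ` to its first `n` values, as a finite sequence. -/
def res (x : ℕ → ℕ) (n : ℕ) : List ℕ := List.ofFn fun i : Fin n => x i

/-- A subtree of `ω^{<ω}`: a set of finite sequences closed under initial segments. -/
def IsSubtree (T : Set (List ℕ)) : Prop := ∀ s ∈ T, ∀ t : List ℕ, t <+: s → t ∈ T

/-- `[T]`, the set of branches of a subtree `T`. -/
def branches (T : Set (List ℕ)) : Set (ℕ → ℕ) := {x | ∀ n, res x n ∈ T}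

/-- A Hechler tree: a (nonempty) subtree in which every node splits cofinitely often. -/
def IsHechler (T : Set (List ℕ)) : Prop :=
  IsSubtree T ∧ [] ∈ T ∧ ∀ s ∈ T, {n : ℕ | s ++ [n] ∉ T}.Finite

/-- Game 2 on `A`: at round `k` Player I plays an infinite set `X k ⊆ ω` and Player II
responds with `m k ∈ X k`; Player II wins iff `m ∈ A`.  A strategy for Player II maps
Player I's previous moves `X 0, …, X (k-1)` together with the current move `X k` to
Player II's move `m k` (Player II's previous responses are determined by the strategy
itself).  It is a *winning* strategy iff it is legal (`σ (X 0, …, X k) ∈ X k` whenever the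
`X i` are infinite) and every play following it lands in `A`. -/
def IIWinsGame2 (A : Set (ℕ → ℕ)) : Prop :=
  ∃ σ : List (Set ℕ) → Set ℕ → ℕ,
    (∀ p : List (Set ℕ), ∀ X : Set ℕ, (∀ Y ∈ p, Y.Infinite) → X.Infinite → σ p X ∈ X) ∧
    ∀ X : ℕ → Set ℕ, (∀ k, (X k).Infinite) →
      (fun k => σ (List.ofFn fun i : Fin k => X i) (X k)) ∈ A

lemma res_zero (x : ℕ → ℕ) : res x 0 = [] := rfl

lemma res_succ (x : ℕ → ℕ) (n : ℕ) : res x (n + 1) = res x n ++ [x n] := by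
  simp only [res, List.ofFn_succ', List.concat_eq_append, Fin.coe_castSucc, Fin.val_last]

lemma res_length (x : ℕ → ℕ) (n : ℕ) : (res x n).length = n := by simp [res]

noncomputable section GameAux

open Classical

/-! ## Hechler tree → strategy -/

/-- the "good" next moves at node `s` of tree `H` -/
def good (H : Set (List ℕ)) (s : List ℕ) : Set ℕ := {n | s ∈ H → s ++ [n] ∈ H}

noncomputable def pick (H : Set (List ℕ)) (s : List ℕ) (X : Set ℕ) : ℕ :=
  if h : (X ∩ good H s).Nonempty then h.some else 0

lemma pick_mem {H : Set (List ℕ)} (hH : IsHechler H) (s : List ℕ) {X : Set ℕ}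
    (hX : X.Infinite) : pick H s X ∈ X ∩ good H s := by
  have hne : (X ∩ good H s).Nonempty := by
    by_cases hs : s ∈ H
    · have hfin := hH.2.2 s hs
      have h2 : (X \ {n | s ++ [n] ∉ H}).Infinite := hX.diff hfin
      obtain ⟨n, hn⟩ := h2.nonempty
      exact ⟨n, hn.1, fun _ => not_not.mp hn.2⟩
    · obtain ⟨n, hn⟩ := hX.nonempty
      exact ⟨n, hn, fun h => absurd h hs⟩
  rw [pick, dif_pos hne]; exact hne.some_mem

/-- reversed history of II's moves from the reversed history of I's moves -/
noncomputable def auxSeq (H : Set (List ℕ)) : List (Set ℕ) → List ℕ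
  | [] => []
  | X :: r => pick H (auxSeq H r).reverse X :: auxSeq H r

noncomputable def strat (H : Set (List ℕ)) (p : List (Set ℕ)) (X : Set ℕ) : ℕ :=
  pick H (auxSeq H p.reverse).reverse X

/-! ## Strategy → Hechler tree -/

variable (σ : List (Set ℕ) → Set ℕ → ℕ)

/-- reversed canonical witness play of I producing reversed sequence of II-moves -/
noncomputable def wit : List ℕ → List (Set ℕ)
  | [] => []
  | n :: r =>
    (if h : ∃ X : Set ℕ, X.Infinite ∧ σ (wit r).reverse X = n then h.choose else ∅) :: wit r

/-- canonical witness play, in order -/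
noncomputable def Wlist (s : List ℕ) : List (Set ℕ) := (wit σ s.reverse).reverse

lemma Wlist_nil : Wlist σ [] = [] := rfl

lemma Wlist_concat (s : List ℕ) (n : ℕ) :
    Wlist σ (s ++ [n]) = Wlist σ s ++
      [if h : ∃ X : Set ℕ, X.Infinite ∧ σ (Wlist σ s) X = n then h.choose else ∅] := by
  simp [Wlist, wit]
  rfl

/-- the tree of sequences produced by `σ` against the canonical witness plays -/
def Hset : Set (List ℕ) :=
  {s | ∀ i : ℕ, ∀ hi : i < s.length,
    ∃ X : Set ℕ, X.Infinite ∧ σ (Wlist σ (s.take i)) X = s[i]}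

lemma Hset_subtree : IsSubtree (Hset σ) := by
  rintro s hs t ⟨u, rfl⟩ i hi
  have h1 : (t ++ u).take i = t.take i := List.take_append_of_le_length (le_of_lt hi)
  have h2 : (t ++ u)[i]'(by simp; omega) = t[i] := List.getElem_append_left hi
  have := hs i (by simp; omega)
  rw [h1, h2] at this
  exact this

lemma Wlist_infinite : ∀ s ∈ Hset σ, ∀ Y ∈ Wlist σ s, Y.Infinite := by
  intro s
  induction s using List.reverseRecOn with
  | nil => intro _ Y hY; simp [Wlist_nil] at hY
  | append_singleton r n ih =>
    intro hs Y hY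
    have hr : r ∈ Hset σ := Hset_subtree σ _ hs r ⟨[n], rfl⟩
    rw [Wlist_concat, List.mem_append] at hY
    rcases hY with hY | hY
    · exact ih hr Y hY
    · simp only [List.mem_singleton] at hY
      have hP : ∃ X : Set ℕ, X.Infinite ∧ σ (Wlist σ r) X = n := by
        have := hs r.length (by simp)
        rwa [List.take_left, List.getElem_concat_length rfl] at this
      rw [hY, dif_pos hP]
      exact hP.choose_spec.1

theorem game2_playerII_iff_hechler (A : Set (ℕ → ℕ)) :
    IIWinsGame2 A ↔ ∃ H : Set (List ℕ), IsHechler H ∧ branches H ⊆ A := by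
  constructor
  · rintro ⟨σ, hleg, hwin⟩
    refine ⟨Hset σ, ⟨Hset_subtree σ, ?_, ?_⟩, ?_⟩
    · intro i hi; simp at hi
    · -- cofinite splitting
      intro s hs
      set R : Set ℕ := {n | ∃ X : Set ℕ, X.Infinite ∧ σ (Wlist σ s) X = n} with hR
      have hRc : Rᶜ.Finite := by
        by_contra hinf
        have hinf' : Rᶜ.Infinite := hinf
        have hmem : σ (Wlist σ s) Rᶜ ∈ Rᶜ := hleg _ _ (Wlist_infinite σ s hs) hinf'
        exact hmem ⟨Rᶜ, hinf', rfl⟩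
      refine hRc.subset ?_
      intro n hn
      simp only [Set.mem_setOf_eq] at hn
      by_contra hnR
      apply hn
      -- show s ++ [n] ∈ Hset σ
      intro i hi
      rcases lt_or_eq_of_le (Nat.lt_succ_iff.mp (by simpa using hi)) with h | h
      · have h1 : (s ++ [n]).take i = s.take i := List.take_append_of_le_length (le_of_lt h)
        have h2 : (s ++ [n])[i]'hi = s[i] := List.getElem_append_left h
        rw [h1, h2]; exact hs i h
      · subst h
        rw [List.take_left, List.getElem_concat_length rfl]
        exact not_not.mp hnR
    · -- branches ⊆ A
      intro x hx
      have hP : ∀ k : ℕ, ∃ X : Set ℕ, X.Infinite ∧ σ (Wlist σ (res x k)) X = x k := by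
        intro k
        have := hx (k + 1) k (by simp [res_length])
        simp only [res_succ] at this
        rwa [List.take_append_of_le_length (by simp [res_length]),
          List.take_of_length_le (by simp [res_length]),
          List.getElem_concat_length (res_length x k).symm] at this
      set Y : ℕ → Set ℕ := fun k =>
        if h : ∃ X : Set ℕ, X.Infinite ∧ σ (Wlist σ (res x k)) X = x k then h.choose else ∅
        with hY
      have hYe : ∀ k, Y k = (hP k).choose := fun k => dif_pos (hP k)
      have hYinf : ∀ k, (Y k).Infinite := fun k => (hYe k) ▸ (hP k).choose_spec.1
      have hofY : ∀ k, (List.ofFn fun i : Fin k => Y i) = Wlist σ (res x k) := by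
        intro k
        induction k with
        | zero => rfl
        | succ k ih =>
          rw [List.ofFn_succ', List.concat_eq_append, res_succ, Wlist_concat]
          simp only [Fin.coe_castSucc, Fin.val_last]
          rw [ih]
      have hplay : (fun k => σ (List.ofFn fun i : Fin k => Y i) (Y k)) = x := by
        funext k
        rw [hofY k, hYe k]
        exact (hP k).choose_spec.2
      have := hwin Y hYinf
      rwa [hplay] at this
  · rintro ⟨H, hH, hHA⟩
    refine ⟨strat H, ?_, ?_⟩
    · intro p X _ hX
      exact (pick_mem hH _ hX).1
    · intro X hX
      set m : ℕ → ℕ := fun k => strat H (List.ofFn fun i : Fin k => X i) (X k) with hm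
      have main : ∀ k, (auxSeq H (List.ofFn fun i : Fin k => X i).reverse).reverse = res m k
          ∧ res m k ∈ H := by
        intro k
        induction k with
        | zero => exact ⟨rfl, hH.2.1⟩
        | succ k ih =>
          have hrev : (List.ofFn fun i : Fin (k+1) => X i).reverse
              = X k :: (List.ofFn fun i : Fin k => X i).reverse := by
            rw [List.ofFn_succ', List.concat_eq_append, List.reverse_append]
            simp
          have hmk : m k = pick H (res m k) (X k) := by
            rw [hm]
            show strat H (List.ofFn fun i : Fin k => X i) (X k) = _
            rw [strat, ih.1]
          constructor
          · rw [hrev]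
            show (pick H (auxSeq H (List.ofFn fun i : Fin k => X i).reverse).reverse (X k)
              :: auxSeq H (List.ofFn fun i : Fin k => X i).reverse).reverse = _
            rw [List.reverse_cons, ih.1, res_succ, ← hmk]
          · rw [res_succ, hmk]
            exact (pick_mem hH (res m k) (hX k)).2 ih.2
      apply hHA
      intro n
      exact (main n).2


end GameAux
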